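/- Convexity of the SDU objective (Theorem 2): let γ₁, γ₂, γ₃ ≥ 0 and λ ≥ 0, and define Ĵ^γ(w) = γ₁·R̂_SU(f_w) + γ₂·R̂_DU(f_w) + γ₃·R̂_SD(f_w) + (λ/2)·‖w‖². If z ↦ ℓ(z,t) is convex on ℝ for each t ∈ {+1,−1} and ℓ(z,+1) − ℓ(z,−1) = −z for all z ∈ ℝ, then Ĵ^γ : ℝ^k → ℝ is a convex function of w. -/

import Mathlib

open scoped RealInnerProductSpace

section SduAux

variable {E : Type*} [AddCommGroup E] [Module ℝ E]

private lemma sdu_add_convex {f g : E → ℝ}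
    (hf : ConvexOn ℝ Set.univ f) (hg : ConvexOn ℝ Set.univ g) :
    ConvexOn ℝ Set.univ (fun w => f w + g w) := hf.add hg

private lemma sdu_add_concave {f g : E → ℝ}
    (hf : ConcaveOn ℝ Set.univ f) (hg : ConcaveOn ℝ Set.univ g) :
    ConcaveOn ℝ Set.univ (fun w => f w + g w) := hf.add hg

private lemma sdu_mul_convex {f : E → ℝ} {c : ℝ}
    (hc : 0 ≤ c) (hf : ConvexOn ℝ Set.univ f) :
    ConvexOn ℝ Set.univ (fun w => c * f w) := by
  simpa [smul_eq_mul] using hf.smul hc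

private lemma sdu_mul_concave {f : E → ℝ} {c : ℝ}
    (hc : c ≤ 0) (hf : ConcaveOn ℝ Set.univ f) :
    ConvexOn ℝ Set.univ (fun w => c * f w) := by
  have h2 : ConvexOn ℝ Set.univ (fun w => (-c) * (-(f w))) := by
    simpa [smul_eq_mul] using (hf.neg).smul (neg_nonneg.2 hc)
  convert h2 using 2 with w
  ring

private lemma sdu_sum_convex {ι : Type*} (s : Finset ι)
    (g : ι → E → ℝ) (h : ∀ i ∈ s, ConvexOn ℝ Set.univ (g i)) :
    ConvexOn ℝ Set.univ (fun w => ∑ i ∈ s, g i w) := by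
  classical
  induction s using Finset.induction_on with
  | empty => simpa using convexOn_const (0 : ℝ) convex_univ
  | @insert a t hi ih =>
    simp only [Finset.sum_insert hi]
    exact sdu_add_convex (h a (Finset.mem_insert_self a t))
      (ih fun i hi' => h i (Finset.mem_insert_of_mem hi'))

private lemma sdu_sum_concave {ι : Type*} (s : Finset ι)
    (g : ι → E → ℝ) (h : ∀ i ∈ s, ConcaveOn ℝ Set.univ (g i)) :
    ConcaveOn ℝ Set.univ (fun w => ∑ i ∈ s, g i w) := by
  classical
  induction s using Finset.induction_on with
  | @insert a t hi ih =>
    simp only [Finset.sum_insert hi]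
    exact sdu_add_concave (h a (Finset.mem_insert_self a t))
      (ih fun i hi' => h i (Finset.mem_insert_of_mem hi'))
  | empty => simpa using concaveOn_const (0 : ℝ) convex_univ

private lemma sdu_lin_convex (c : ℝ) : ConvexOn ℝ Set.univ (fun z : ℝ => c * z) := by
  refine ⟨convex_univ, fun x _ y _ a b _ _ _ => ?_⟩
  simp only [smul_eq_mul]
  exact le_of_eq (by ring)

variable {k : ℕ}

private lemma sdu_comp_inner {h : ℝ → ℝ} (hh : ConvexOn ℝ Set.univ h)
    (v : EuclideanSpace ℝ (Fin k)) :
    ConvexOn ℝ Set.univ (fun w => h ⟪w, v⟫) := by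
  refine ⟨convex_univ, fun x _ y _ a b ha hb hab => ?_⟩
  have hi : ⟪a • x + b • y, v⟫ = a * ⟪x, v⟫ + b * ⟪y, v⟫ := by
    rw [inner_add_left, real_inner_smul_left, real_inner_smul_left]
  show h ⟪a • x + b • y, v⟫ ≤ a • h ⟪x, v⟫ + b • h ⟪y, v⟫
  rw [hi]
  simpa [smul_eq_mul] using hh.2 (Set.mem_univ ⟪x, v⟫) (Set.mem_univ ⟪y, v⟫) ha hb hab

private lemma sdu_inner_lin_convex (c : ℝ) (v : EuclideanSpace ℝ (Fin k)) :
    ConvexOn ℝ Set.univ (fun w => c * ⟪w, v⟫) := sdu_comp_inner (sdu_lin_convex c) v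

private lemma sdu_inner_lin_concave (c : ℝ) (v : EuclideanSpace ℝ (Fin k)) :
    ConcaveOn ℝ Set.univ (fun w => c * ⟪w, v⟫) := by
  have h2 := (sdu_inner_lin_convex (-c) v).neg
  convert h2 using 2 with w
  case e'_12 => simp [neg_mul]
  all_goals rfl

private lemma sdu_normsq_convex :
    ConvexOn ℝ Set.univ (fun w : EuclideanSpace ℝ (Fin k) => ‖w‖ ^ 2) := by
  refine ⟨convex_univ, fun x _ y _ a b ha hb hab => ?_⟩
  have h1 : ‖a • x + b • y‖ ≤ a * ‖x‖ + b * ‖y‖ := by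
    calc ‖a • x + b • y‖ ≤ ‖a • x‖ + ‖b • y‖ := norm_add_le _ _
      _ = a * ‖x‖ + b * ‖y‖ := by
          rw [norm_smul, norm_smul, Real.norm_eq_abs, Real.norm_eq_abs,
            abs_of_nonneg ha, abs_of_nonneg hb]
  have h2 : ‖a • x + b • y‖ ^ 2 ≤ (a * ‖x‖ + b * ‖y‖) ^ 2 :=
    pow_le_pow_left₀ (norm_nonneg _) h1 2
  have h3 : (a * ‖x‖ + b * ‖y‖) ^ 2 ≤ a * ‖x‖ ^ 2 + b * ‖y‖ ^ 2 := by
    nlinarith [sq_nonneg (‖x‖ - ‖y‖), mul_nonneg ha hb, norm_nonneg x, norm_nonneg y]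
  simpa [smul_eq_mul] using h2.trans h3

end SduAux

/-- Convexity of the SDU objective (Theorem 2). -/
theorem sdu_objective_convex {d k : ℕ}
    (πp πm : ℝ) (hπp : πp ∈ Set.Ioo (0 : ℝ) 1) (hπm : πm = 1 - πp) (hne : πp ≠ πm)
    (πS πD : ℝ) (hπS : πS = πp ^ 2 + πm ^ 2) (hπD : πD = 2 * πp * πm)
    (ℓ : ℝ → ℝ → ℝ)
    (L : ℝ → ℝ → ℝ) (hL : ∀ z t, L z t = (πp * ℓ z t - πm * ℓ z (-t)) / (πp - πm))
    (Lt : ℝ → ℝ) (hLt : ∀ z, Lt z = (ℓ z 1 - ℓ z (-1)) / (πp - πm))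
    (nS nD nU : ℕ) (hnS : 1 ≤ nS) (hnD : 1 ≤ nD) (hnU : 1 ≤ nU)
    (xS xS' : Fin nS → (Fin d → ℝ)) (xD xD' : Fin nD → (Fin d → ℝ))
    (xU : Fin nU → (Fin d → ℝ))
    (φ : (Fin d → ℝ) → EuclideanSpace ℝ (Fin k))
    (fw : EuclideanSpace ℝ (Fin k) → (Fin d → ℝ) → ℝ)
    (hfw : ∀ w x, fw w x = ⟪w, φ x⟫)
    (RhatSU RhatDU RhatSD : ((Fin d → ℝ) → ℝ) → ℝ)
    (hRhatSU : ∀ f : (Fin d → ℝ) → ℝ,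
      RhatSU f = πS / (2 * nS) * ∑ i, (Lt (f (xS i)) + Lt (f (xS' i)))
        + (1 / nU) * ∑ i, L (f (xU i)) (-1))
    (hRhatDU : ∀ f : (Fin d → ℝ) → ℝ,
      RhatDU f = -(πD / (2 * nD)) * ∑ i, (Lt (f (xD i)) + Lt (f (xD' i)))
        + (1 / nU) * ∑ i, L (f (xU i)) 1)
    (hRhatSD : ∀ f : (Fin d → ℝ) → ℝ,
      RhatSD f = πS / (2 * nS) * ∑ i, (L (f (xS i)) 1 + L (f (xS' i)) 1)
        + πD / (2 * nD) * ∑ i, (L (f (xD i)) (-1) + L (f (xD' i)) (-1)))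
    (γ₁ γ₂ γ₃ lam : ℝ) (hγ₁ : 0 ≤ γ₁) (hγ₂ : 0 ≤ γ₂) (hγ₃ : 0 ≤ γ₃) (hlam : 0 ≤ lam)
    (J : EuclideanSpace ℝ (Fin k) → ℝ)
    (hJ : ∀ w, J w = γ₁ * RhatSU (fw w) + γ₂ * RhatDU (fw w) + γ₃ * RhatSD (fw w)
        + lam / 2 * ‖w‖ ^ 2)
    (hconv : ∀ t ∈ ({1, -1} : Set ℝ), ConvexOn ℝ Set.univ (fun z => ℓ z t))
    (hodd : ∀ z : ℝ, ℓ z 1 - ℓ z (-1) = -z) :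
    ConvexOn ℝ Set.univ J := by
  have hd : πp - πm ≠ 0 := sub_ne_zero.2 hne
  have hℓm : ConvexOn ℝ Set.univ (fun z => ℓ z (-1)) := hconv (-1) (by simp)
  have hL1 : ConvexOn ℝ Set.univ (fun z => L z 1) := by
    have he : (fun z => L z 1) = fun z => ℓ z (-1) + (-(πp / (πp - πm))) * z := by
      funext z
      have h1 : ℓ z 1 = ℓ z (-1) - z := by linarith [hodd z]
      rw [hL, h1]
      field_simp
      ring
    rw [he]
    exact sdu_add_convex hℓm (sdu_lin_convex _)
  have hLm : ConvexOn ℝ Set.univ (fun z => L z (-1)) := by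
    have he : (fun z => L z (-1)) = fun z => ℓ z (-1) + (πm / (πp - πm)) * z := by
      funext z
      have h1 : ℓ z 1 = ℓ z (-1) - z := by linarith [hodd z]
      rw [hL]
      simp only [neg_neg]
      rw [h1]
      field_simp
      ring
    rw [he]
    exact sdu_add_convex hℓm (sdu_lin_convex _)
  have hLt0 : ∀ z, Lt z = (-(1 / (πp - πm))) * z := by
    intro z
    rw [hLt, hodd z]
    field_simp
  have hLtconv : ∀ v : EuclideanSpace ℝ (Fin k),
      ConvexOn ℝ Set.univ (fun w => Lt ⟪w, v⟫) := by
    intro v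
    simp only [hLt0]
    exact sdu_inner_lin_convex _ v
  have hLtconc : ∀ v : EuclideanSpace ℝ (Fin k),
      ConcaveOn ℝ Set.univ (fun w => Lt ⟪w, v⟫) := by
    intro v
    simp only [hLt0]
    exact sdu_inner_lin_concave _ v
  have hπm0 : 0 < πm := by rw [hπm]; linarith [hπp.2]
  have hπS0 : 0 ≤ πS := by rw [hπS]; positivity
  have hπD0 : 0 ≤ πD := by rw [hπD]; nlinarith [hπp.1, hπm0]
  have hnS0 : (0 : ℝ) < (nS : ℝ) := by exact_mod_cast hnS
  have hnD0 : (0 : ℝ) < (nD : ℝ) := by exact_mod_cast hnD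
  have hnU0 : (0 : ℝ) < (nU : ℝ) := by exact_mod_cast hnU
  have hcS : 0 ≤ πS / (2 * (nS : ℝ)) := div_nonneg hπS0 (by positivity)
  have hcD : 0 ≤ πD / (2 * (nD : ℝ)) := div_nonneg hπD0 (by positivity)
  have hcU : 0 ≤ 1 / (nU : ℝ) := by positivity
  have hJe : J = fun w =>
      γ₁ * (πS / (2 * nS) * ∑ i, (Lt ⟪w, φ (xS i)⟫ + Lt ⟪w, φ (xS' i)⟫)
        + 1 / nU * ∑ i, L ⟪w, φ (xU i)⟫ (-1))
    + γ₂ * (-(πD / (2 * nD)) * ∑ i, (Lt ⟪w, φ (xD i)⟫ + Lt ⟪w, φ (xD' i)⟫)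
        + 1 / nU * ∑ i, L ⟪w, φ (xU i)⟫ 1)
    + γ₃ * (πS / (2 * nS) * ∑ i, (L ⟪w, φ (xS i)⟫ 1 + L ⟪w, φ (xS' i)⟫ 1)
        + πD / (2 * nD) * ∑ i, (L ⟪w, φ (xD i)⟫ (-1) + L ⟪w, φ (xD' i)⟫ (-1)))
    + lam / 2 * ‖w‖ ^ 2 := by
    funext w
    rw [hJ, hRhatSU, hRhatDU, hRhatSD]
    simp only [hfw]
  rw [hJe]
  refine sdu_add_convex (sdu_add_convex (sdu_add_convex ?_ ?_) ?_) ?_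
  · exact sdu_mul_convex hγ₁ (sdu_add_convex
      (sdu_mul_convex hcS (sdu_sum_convex Finset.univ
        (fun i w => Lt ⟪w, φ (xS i)⟫ + Lt ⟪w, φ (xS' i)⟫)
        (fun i _ => sdu_add_convex (hLtconv _) (hLtconv _))))
      (sdu_mul_convex hcU (sdu_sum_convex Finset.univ
        (fun i w => L ⟪w, φ (xU i)⟫ (-1))
        (fun i _ => sdu_comp_inner hLm _))))
  · exact sdu_mul_convex hγ₂ (sdu_add_convex
      (sdu_mul_concave (neg_nonpos.2 hcD) (sdu_sum_concave Finset.univ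
        (fun i w => Lt ⟪w, φ (xD i)⟫ + Lt ⟪w, φ (xD' i)⟫)
        (fun i _ => sdu_add_concave (hLtconc _) (hLtconc _))))
      (sdu_mul_convex hcU (sdu_sum_convex Finset.univ
        (fun i w => L ⟪w, φ (xU i)⟫ 1)
        (fun i _ => sdu_comp_inner hL1 _))))
  · exact sdu_mul_convex hγ₃ (sdu_add_convex
      (sdu_mul_convex hcS (sdu_sum_convex Finset.univ
        (fun i w => L ⟪w, φ (xS i)⟫ 1 + L ⟪w, φ (xS' i)⟫ 1)
        (fun i _ => sdu_add_convex (sdu_comp_inner hL1 _) (sdu_comp_inner hL1 _))))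
      (sdu_mul_convex hcD (sdu_sum_convex Finset.univ
        (fun i w => L ⟪w, φ (xD i)⟫ (-1) + L ⟪w, φ (xD' i)⟫ (-1))
        (fun i _ => sdu_add_convex (sdu_comp_inner hLm _) (sdu_comp_inner hLm _)))))
  · exact sdu_mul_convex (by positivity) sdu_normsq_convex
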